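/- Let α ≥ 0 and let g : D̄ → ℂ be continuous on the closed unit disc. Then for every z ∈ D, ∫_D |G_α(z,w) g(w)| dA(w) ≤ 2^α ‖g‖_∞, where ‖g‖_∞ = sup_{z∈D}|g(z)|; moreover, for every fixed w ∈ D, ∫_D |G_α(z,w)| dA(z) < ∞. -/

import Mathlib

open Complex MeasureTheory Metric Real Set intervalIntegral

noncomputable section

/-! ### Auxiliary lemmas -/

theorem my_lintegral_polar_real (g : ℝ × ℝ → ENNReal) :
    (∫⁻ p in polarCoord.target, ENNReal.ofReal p.1 * g (polarCoord.symm p)) = ∫⁻ p, g p := by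
  set B : ℝ × ℝ → ℝ × ℝ →L[ℝ] ℝ × ℝ := fun p =>
    LinearMap.toContinuousLinearMap (Matrix.toLin (Module.Basis.finTwoProd ℝ) (Module.Basis.finTwoProd ℝ)
      !![Real.cos p.2, -p.1 * Real.sin p.2; Real.sin p.2, p.1 * Real.cos p.2])
  have A : ∀ p ∈ polarCoord.target, HasFDerivWithinAt polarCoord.symm (B p) polarCoord.target p :=
    fun p _ => (hasFDerivAt_polarCoord_symm p).hasFDerivWithinAt
  have B_det : ∀ p, (B p).det = p.1 := by
    intro p
    conv_rhs => rw [← one_mul p.1, ← Real.cos_sq_add_sin_sq p.2]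
    simp only [B, neg_mul, LinearMap.det_toContinuousLinearMap, LinearMap.det_toLin,
      Matrix.det_fin_two_of, sub_neg_eq_add]
    ring
  symm
  calc
    ∫⁻ p, g p = ∫⁻ p in polarCoord.source, g p := by
      rw [← setLIntegral_univ]
      exact (setLIntegral_congr polarCoord_source_ae_eq_univ.symm)
    _ = ∫⁻ p in polarCoord.symm '' polarCoord.target, g p := by
      rw [polarCoord.symm_image_target_eq_source]
    _ = ∫⁻ p in polarCoord.target, ENNReal.ofReal |(B p).det| * g (polarCoord.symm p) :=
      lintegral_image_eq_lintegral_abs_det_fderiv_mul volume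
        polarCoord.open_target.measurableSet A polarCoord.symm.injOn g
    _ = ∫⁻ p in polarCoord.target, ENNReal.ofReal p.1 * g (polarCoord.symm p) := by
      apply setLIntegral_congr_fun polarCoord.open_target.measurableSet
      intro p hp
      dsimp only
      rw [B_det, abs_of_pos hp.1]

theorem my_lintegral_polar (g : ℂ → ENNReal) :
    (∫⁻ p in polarCoord.target, ENNReal.ofReal p.1 * g (Complex.polarCoord.symm p))
      = ∫⁻ z, g z := by
  rw [← (Complex.volume_preserving_equiv_real_prod.symm).lintegral_comp_emb
    Complex.measurableEquivRealProd.symm.measurableEmbedding,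
    ← my_lintegral_polar_real (fun p : ℝ × ℝ => g (Complex.measurableEquivRealProd.symm p))]
  rfl

lemma slit_aux {c : ℂ} (hc : ‖c‖ < 1) {w : ℂ} (hw : ‖w‖ ≤ 1) :
    (1 - c * w) ∈ Complex.slitPlane := by
  apply Complex.mem_slitPlane_iff.2
  left
  have h1 : ‖c * w‖ < 1 := by
    rw [norm_mul]
    calc ‖c‖ * ‖w‖ ≤ ‖c‖ * 1 :=
      mul_le_mul_of_nonneg_left hw (norm_nonneg c)
    _ < 1 := by simpa using hc
  have h2 : (c * w).re ≤ ‖c * w‖ := Complex.re_le_norm _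
  simp only [Complex.sub_re, Complex.one_re]
  linarith

lemma cont_aux {c : ℂ} (hc : ‖c‖ < 1) :
    Continuous fun θ : ℝ => Complex.log (1 - c * Complex.exp (θ * Complex.I)) := by
  rw [continuous_iff_continuousAt]
  intro θ
  have h1 : Continuous fun θ : ℝ => 1 - c * Complex.exp (θ * Complex.I) := by
    continuity
  have h2 : ‖Complex.exp ((θ:ℂ) * Complex.I)‖ ≤ 1 := by
    rw [Complex.norm_exp_ofReal_mul_I]
  exact ContinuousAt.comp (x := θ) (g := Complex.log)
    (f := fun θ : ℝ => 1 - c * Complex.exp ((θ:ℂ) * Complex.I))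
    (continuousAt_clog (slit_aux hc h2)) h1.continuousAt

lemma circle_mean_log (c : ℂ) (hc : ‖c‖ < 1) :
    ∫ θ in (0:ℝ)..(2*π), Real.log (‖1 - c * Complex.exp (θ * Complex.I)‖) = 0 := by
  set f : ℂ → ℂ := fun w => Complex.log (1 - c * w) with hf
  have hdiff : DifferentiableOn ℂ f (closedBall (0:ℂ) 1) := by
    intro w hw
    have h1 : DifferentiableAt ℂ (fun w : ℂ => 1 - c * w) w := by
      apply DifferentiableAt.sub (differentiableAt_const _)
      exact (differentiableAt_id.const_mul c)
    exact ((Complex.differentiableAt_log (slit_aux hc (by simpa using hw))).comp w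
      h1).differentiableWithinAt
  have hcl : DiffContOnCl ℂ f (ball (0:ℂ) 1) := by
    apply DifferentiableOn.diffContOnCl
    rwa [closure_ball (0:ℂ) one_ne_zero]
  have key := hcl.circleIntegral_sub_inv_smul (mem_ball_self one_pos)
  have hf0 : f 0 = 0 := by simp [hf]
  rw [hf0, smul_zero] at key
  simp only [circleIntegral, deriv_circleMap, sub_zero, smul_eq_mul] at key
  have hsimp : ∀ θ : ℝ, circleMap 0 1 θ * Complex.I * ((circleMap 0 1 θ)⁻¹ * f (circleMap 0 1 θ))
      = Complex.I * f (circleMap 0 1 θ) := by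
    intro θ
    have : circleMap 0 1 θ ≠ 0 := circleMap_ne_center one_ne_zero
    field_simp
  rw [intervalIntegral.integral_congr (fun θ _ => hsimp θ)] at key
  rw [intervalIntegral.integral_const_mul] at key
  have key2 : ∫ θ in (0:ℝ)..(2*π), f (circleMap 0 1 θ) = 0 := by
    rcases mul_eq_zero.1 key with h | h
    · exact absurd h Complex.I_ne_zero
    · exact h
  have hint : IntervalIntegrable (fun θ : ℝ => f (circleMap 0 1 θ)) volume 0 (2*π) := by
    apply Continuous.intervalIntegrable
    have := cont_aux hc
    simpa [circleMap, hf] using this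
  have key3 := Complex.reCLM.intervalIntegral_comp_comm hint
  rw [key2] at key3
  simp only [map_zero] at key3
  have final : ∫ θ in (0:ℝ)..(2*π), Real.log (‖1 - c * Complex.exp (θ * Complex.I)‖)
      = ∫ x in (0:ℝ)..(2*π), Complex.reCLM (f (circleMap 0 1 x)) := by
    apply intervalIntegral.integral_congr
    intro θ _
    simp [circleMap, hf, Complex.log_re]
  rw [final, key3]

lemma circle_mean_log_pi (c : ℂ) (hc : ‖c‖ < 1) :
    ∫ θ in (-π)..π, Real.log (‖1 - c * Complex.exp (θ * Complex.I)‖) = 0 := by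
  have hper : Function.Periodic
      (fun θ : ℝ => Real.log (‖1 - c * Complex.exp (θ * Complex.I)‖)) (2*π) := by
    intro θ
    have h : ((θ + 2*π : ℝ) : ℂ) * Complex.I = θ * Complex.I + 2*π*Complex.I := by
      push_cast; ring
    simp only [h, Complex.exp_add, Complex.exp_two_pi_mul_I, mul_one]
  have h2 := hper.intervalIntegral_add_eq (-π) 0
  rw [show -π + 2*π = π by ring, zero_add] at h2
  rw [h2]
  exact circle_mean_log c hc

lemma circle_mean_log_neg_pi (c : ℂ) (hc : ‖c‖ < 1) :
    ∫ θ in (-π)..π, Real.log (‖1 - c * Complex.exp (-(θ * Complex.I))‖) = 0 := by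
  have h := intervalIntegral.integral_comp_neg (a := -π) (b := π)
    (fun θ : ℝ => Real.log (‖1 - c * Complex.exp (θ * Complex.I)‖))
  rw [neg_neg] at h
  have congr1 : ∫ θ in (-π)..π, Real.log (‖1 - c * Complex.exp (-(θ * Complex.I))‖)
      = ∫ θ in (-π)..π, Real.log (‖1 - c * Complex.exp (((-θ : ℝ) : ℂ) * Complex.I)‖) := by
    apply intervalIntegral.integral_congr
    intro θ _
    norm_num
  rw [congr1, h]
  exact circle_mean_log_pi c hc

lemma cont_log_abs {f : ℝ → ℂ} (hf : Continuous f) (hne : ∀ θ, f θ ≠ 0) :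
    Continuous fun θ => Real.log (‖f θ‖) := by
  rw [continuous_iff_continuousAt]
  intro θ
  exact (Real.continuousAt_log (by simpa using hne θ)).comp
    (continuous_norm.comp hf).continuousAt

/-- The open unit disc in the complex plane. -/
def unitDisc : Set ℂ := Metric.ball 0 1

/-- The unit circle in the complex plane. -/
def unitCircle : Set ℂ := Metric.sphere 0 1

/-- The Wirtinger derivative `∂f/∂z = (1/2)(f_x - i f_y)`. -/
def wderiv (f : ℂ → ℂ) (z : ℂ) : ℂ :=
  (fderiv ℝ f z 1 - Complex.I * fderiv ℝ f z Complex.I) / 2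

/-- The conjugate Wirtinger derivative `∂f/∂z̄ = (1/2)(f_x + i f_y)`. -/
def wderivBar (f : ℂ → ℂ) (z : ℂ) : ℂ :=
  (fderiv ℝ f z 1 + Complex.I * fderiv ℝ f z Complex.I) / 2

/-- `‖D_f(z)‖ = |f_z(z)| + |f_z̄(z)|`, the operator norm of the real Jacobian. -/
def jacNorm (f : ℂ → ℂ) (z : ℂ) : ℝ :=
  ‖wderiv f z‖ + ‖wderivBar f z‖

/-- `f` is α-harmonic on the unit disc: `∂/∂z[(1-|z|²)^{-α} ∂f/∂z̄] = 0` on `𝔻`. -/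
def IsAlphaHarmonic (α : ℝ) (f : ℂ → ℂ) : Prop :=
  ∀ z ∈ unitDisc,
    wderiv (fun w => (((1 - ‖w‖ ^ 2) ^ (-α) : ℝ) : ℂ) * wderivBar f w) z = 0

/-- The α-harmonic Poisson kernel `P_α(z) = (1-|z|²)^{α+1}/((1-z)(1-z̄)^{α+1})`. -/
def alphaPoissonKernel (α : ℝ) (z : ℂ) : ℂ :=
  (((1 - ‖z‖ ^ 2) ^ (α + 1) : ℝ) : ℂ) /
    ((1 - z) * (1 - (starRingEnd ℂ) z) ^ ((α : ℂ) + 1))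

/-- The Poisson-type integral `P_α[f*](z) = (1/2π) ∫₀^{2π} P_α(z e^{-iθ}) f*(e^{iθ}) dθ`. -/
def alphaPoissonIntegral (α : ℝ) (fstar : ℂ → ℂ) (z : ℂ) : ℂ :=
  (1 / (2 * Real.pi) : ℝ) • ∫ θ in (0:ℝ)..(2 * Real.pi),
    alphaPoissonKernel α (z * Complex.exp (-(θ : ℂ) * Complex.I)) *
      fstar (Complex.exp ((θ : ℂ) * Complex.I))

/-- The ordinary Poisson kernel `P(z) = (1-|z|²)/|1-z|²`. -/
def poissonKernelR (z : ℂ) : ℝ := (1 - ‖z‖ ^ 2) / ‖1 - z‖ ^ 2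

/-- `h(s) = ∫₀^s t^α/(1-t) dt`. -/
def greenH (α : ℝ) (s : ℝ) : ℝ := ∫ t in (0:ℝ)..s, t ^ α / (1 - t)

/-- `φ(z,w) = (1-|z|²)(1-|w|²)/|1 - z w̄|²`. -/
def greenPhi (z w : ℂ) : ℝ :=
  (1 - ‖z‖ ^ 2) * (1 - ‖w‖ ^ 2) /
    ‖1 - z * (starRingEnd ℂ) w‖ ^ 2

/-- The α-harmonic Green function `G_α(z,w) = -(1 - z w̄)^α h(φ(z,w))`. -/
def greenFn (α : ℝ) (z w : ℂ) : ℂ :=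
  -(1 - z * (starRingEnd ℂ) w) ^ (α : ℂ) * ((greenH α (greenPhi z w) : ℝ) : ℂ)

/-- `G[g](z) = ∫_𝔻 G_α(z,w) g(w) dA(w)` with `dA` the normalized area measure. -/
def greenIntegral (α : ℝ) (g : ℂ → ℂ) (z : ℂ) : ℂ :=
  (1 / Real.pi : ℝ) • ∫ w in unitDisc, greenFn α z w * g w

/-- `‖f*‖_∞ = sup_{ζ ∈ 𝕋} |f*(ζ)|`. -/
def supCircle (fstar : ℂ → ℂ) : ℝ := ⨆ ζ ∈ unitCircle, ‖fstar ζ‖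

/-- `‖g‖_∞ = sup_{z ∈ 𝔻} |g(z)|`. -/
def supDisc (g : ℂ → ℂ) : ℝ := ⨆ z ∈ unitDisc, ‖g z‖

/-- The Laplacian of a real-valued function: `Δu = u_{xx} + u_{yy}`. -/
def lapR (u : ℂ → ℝ) (z : ℂ) : ℝ :=
  fderiv ℝ (fun w => fderiv ℝ u w 1) z 1 +
    fderiv ℝ (fun w => fderiv ℝ u w Complex.I) z Complex.I

def Lfn (z w : ℂ) : ℝ :=
  2 * Real.log (‖1 - z * (starRingEnd ℂ) w‖) - 2 * Real.log (‖z - w‖)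

lemma key_identity (z w : ℂ) :
    ‖1 - z * (starRingEnd ℂ) w‖ ^ 2 - ‖z - w‖ ^ 2
      = (1 - ‖z‖ ^ 2) * (1 - ‖w‖ ^ 2) := by
  simp only [Complex.sq_norm, Complex.normSq_apply, Complex.sub_re, Complex.sub_im,
    Complex.mul_re, Complex.mul_im, Complex.one_re, Complex.one_im, Complex.conj_re,
    Complex.conj_im]
  ring

lemma abs_one_sub_mul_pos {z w : ℂ} (hz : ‖z‖ < 1) (hw : ‖w‖ ≤ 1) :
    0 < ‖1 - z * (starRingEnd ℂ) w‖ := by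
  have h1 : ‖z * (starRingEnd ℂ) w‖ < 1 := by
    rw [norm_mul, Complex.norm_conj]
    calc ‖z‖ * ‖w‖ ≤ ‖z‖ * 1 :=
      mul_le_mul_of_nonneg_left hw (norm_nonneg z)
    _ < 1 := by simpa using hz
  have h2 := norm_sub_norm_le (1:ℂ) (z * (starRingEnd ℂ) w)
  simp only [norm_one] at h2
  linarith

lemma abs_sub_le_abs_one_sub {z w : ℂ} (hz : ‖z‖ < 1) (hw : ‖w‖ < 1) :
    ‖z - w‖ ≤ ‖1 - z * (starRingEnd ℂ) w‖ := by
  have hkey := key_identity z w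
  have h1 : 0 ≤ (1 - ‖z‖ ^ 2) * (1 - ‖w‖ ^ 2) := by
    have hz2 : ‖z‖ ^ 2 < 1 := by nlinarith [norm_nonneg z]
    have hw2 : ‖w‖ ^ 2 < 1 := by nlinarith [norm_nonneg w]
    nlinarith
  have h2 : ‖z - w‖ ^ 2 ≤ ‖1 - z * (starRingEnd ℂ) w‖ ^ 2 := by linarith
  exact le_of_pow_le_pow_left₀ two_ne_zero (norm_nonneg _) h2

lemma Lfn_nonneg {z w : ℂ} (hz : ‖z‖ < 1) (hw : ‖w‖ < 1) (hne : z ≠ w) :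
    0 ≤ Lfn z w := by
  have hB : 0 < ‖z - w‖ := by
    simpa [sub_eq_zero] using hne
  have := Real.log_le_log hB (abs_sub_le_abs_one_sub hz hw)
  unfold Lfn; linarith

lemma Lfn_symm (z w : ℂ) : Lfn z w = Lfn w z := by
  unfold Lfn
  rw [show z - w = -(w - z) by ring, norm_neg]
  congr 3
  rw [← Complex.norm_conj (1 - z * (starRingEnd ℂ) w)]
  congr 1
  simp only [map_sub, map_mul, map_one, Complex.conj_conj]
  ring

lemma greenH_nonneg {α s : ℝ} (hα : 0 ≤ α) (h0 : 0 ≤ s) (h1 : s < 1) : 0 ≤ greenH α s := by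
  apply intervalIntegral.integral_nonneg h0
  intro t ht
  apply div_nonneg (Real.rpow_nonneg ht.1 α)
  linarith [ht.2]

lemma integrand_continuousOn {α s : ℝ} (hα : 0 ≤ α) (h1 : s < 1) :
    ContinuousOn (fun t : ℝ => t ^ α / (1 - t)) (Icc 0 s) := by
  intro t ht
  apply ContinuousWithinAt.div
  · exact (Real.continuousAt_rpow_const t α (Or.inr hα)).continuousWithinAt
  · exact (continuous_const.sub continuous_id).continuousWithinAt
  · intro h; rw [sub_eq_zero] at h; linarith [ht.2]

lemma greenH_le {α s : ℝ} (hα : 0 ≤ α) (h0 : 0 ≤ s) (h1 : s < 1) :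
    greenH α s ≤ -Real.log (1 - s) := by
  have hint : IntervalIntegrable (fun t : ℝ => t ^ α / (1 - t)) volume 0 s := by
    apply ContinuousOn.intervalIntegrable
    rw [uIcc_of_le h0]
    exact integrand_continuousOn hα h1
  have hint2 : IntervalIntegrable (fun t : ℝ => (1 - t)⁻¹) volume 0 s := by
    apply ContinuousOn.intervalIntegrable
    rw [uIcc_of_le h0]
    intro t ht
    apply ContinuousWithinAt.inv₀ (continuous_const.sub continuous_id).continuousWithinAt
    intro h; simp only [Pi.sub_apply, id_eq] at h; rw [sub_eq_zero] at h; linarith [ht.2]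
  have hmono : greenH α s ≤ ∫ t in (0:ℝ)..s, (1 - t)⁻¹ := by
    apply intervalIntegral.integral_mono_on h0 hint hint2
    intro t ht
    have h1t : (0:ℝ) < 1 - t := by linarith [ht.2]
    rw [div_eq_mul_inv]
    have step : t ^ α * (1 - t)⁻¹ ≤ 1 * (1 - t)⁻¹ :=
      mul_le_mul_of_nonneg_right (Real.rpow_le_one ht.1 (by linarith [ht.2]) hα)
        (inv_nonneg.2 h1t.le)
    simpa using step
  have hcalc : ∫ t in (0:ℝ)..s, (1 - t)⁻¹ = -Real.log (1 - s) := by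
    have hd : ∀ t ∈ uIcc (0:ℝ) s, HasDerivAt (fun t : ℝ => -Real.log (1 - t)) ((1 - t)⁻¹) t := by
      intro t ht
      rw [uIcc_of_le h0] at ht
      have h1t : (1:ℝ) - t ≠ 0 := by intro h; rw [sub_eq_zero] at h; linarith [ht.2]
      have := ((Real.hasDerivAt_log h1t).comp t (((hasDerivAt_id t).const_sub 1)))
      refine this.neg.congr_deriv ?_
      simp
    rw [intervalIntegral.integral_eq_sub_of_hasDerivAt hd hint2]
    simp
  rw [← hcalc]
  exact hmono

lemma greenFn_abs_le {α : ℝ} (hα : 0 ≤ α) {z w : ℂ} (hz : ‖z‖ < 1)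
    (hw : ‖w‖ < 1) (hne : z ≠ w) :
    ‖greenFn α z w‖ ≤ 2 ^ α * Lfn z w := by
  set A := ‖1 - z * (starRingEnd ℂ) w‖ with hA_def
  set B := ‖z - w‖ with hB_def
  have hA : 0 < A := abs_one_sub_mul_pos hz hw.le
  have hB : 0 < B := by simpa [hB_def, sub_eq_zero] using hne
  have hA2 : A ≤ 2 := by
    have h1 := norm_sub_le (1:ℂ) (z * (starRingEnd ℂ) w)
    have h2 : ‖z * (starRingEnd ℂ) w‖ ≤ 1 := by
      rw [norm_mul, Complex.norm_conj]
      nlinarith [norm_nonneg z, norm_nonneg w]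
    simp only [norm_one] at h1
    rw [hA_def]; linarith
  have hz2 : ‖z‖ ^ 2 < 1 := by nlinarith [norm_nonneg z]
  have hw2 : ‖w‖ ^ 2 < 1 := by nlinarith [norm_nonneg w]
  have hs0 : 0 ≤ greenPhi z w := by
    apply div_nonneg _ (sq_nonneg _)
    nlinarith
  have h1s : 1 - greenPhi z w = B ^ 2 / A ^ 2 := by
    rw [greenPhi, ← key_identity z w, ← hA_def, ← hB_def]
    rw [eq_div_iff (pow_ne_zero 2 hA.ne'), sub_mul, div_mul_cancel₀ _ (pow_ne_zero 2 hA.ne')]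
    ring
  have hs1 : greenPhi z w < 1 := by
    have : 0 < B ^ 2 / A ^ 2 := div_pos (pow_pos hB 2) (pow_pos hA 2)
    linarith
  have hlog : -Real.log (1 - greenPhi z w) = Lfn z w := by
    rw [h1s, Real.log_div (pow_ne_zero 2 hB.ne') (pow_ne_zero 2 hA.ne'),
      Real.log_pow, Real.log_pow]
    unfold Lfn
    push_cast
    ring
  have habs : ‖greenFn α z w‖ = A ^ α * greenH α (greenPhi z w) := by
    unfold greenFn
    rw [norm_mul, norm_neg, Complex.norm_cpow_real, Complex.norm_real, Real.norm_eq_abs,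
      _root_.abs_of_nonneg (greenH_nonneg hα hs0 hs1)]
  rw [habs, ← hlog]
  apply mul_le_mul
  · exact Real.rpow_le_rpow hA.le hA2 hα
  · exact greenH_le hα hs0 hs1
  · exact greenH_nonneg hα hs0 hs1
  · positivity

lemma circle_lower (z : ℂ) (hz : ‖z‖ < 1) {r : ℝ} (h0 : 0 < r) (h1 : r < 1)
    (hne : r ≠ ‖z‖) :
    2*π*Real.log r ≤ ∫ θ in (-π)..π, Real.log (‖z - r * Complex.exp (θ * Complex.I)‖) := by
  rcases lt_or_gt_of_ne hne with hlt | hgt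
  · -- r < |z|
    have hz0 : z ≠ 0 := by
      intro h
      rw [h] at hlt
      simp at hlt
      linarith
    set c : ℂ := (r:ℂ) / z with hc_def
    have hc : ‖c‖ < 1 := by
      rw [hc_def, norm_div, Complex.norm_real, Real.norm_eq_abs, abs_of_pos h0]
      rw [div_lt_one (lt_trans h0 hlt)]
      exact hlt
    have hcc : ∀ θ : ℝ, ‖1 - c * Complex.exp (θ * Complex.I)‖ ≠ 0 := by
      intro θ
      have h2 : ‖c * Complex.exp (θ * Complex.I)‖ < 1 := by
        rw [norm_mul, Complex.norm_exp_ofReal_mul_I, mul_one]; exact hc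
      have h3 := norm_sub_norm_le (1:ℂ) (c * Complex.exp (θ * Complex.I))
      simp only [norm_one] at h3
      intro h; rw [h] at h3; linarith
    have hpt : ∀ θ : ℝ, Real.log (‖z - r * Complex.exp (θ * Complex.I)‖)
        = Real.log (‖z‖)
          + Real.log (‖1 - c * Complex.exp (θ * Complex.I)‖) := by
      intro θ
      have hfac : z - r * Complex.exp (θ * Complex.I)
          = z * (1 - c * Complex.exp (θ * Complex.I)) := by
        rw [hc_def]; field_simp
      rw [hfac, norm_mul, Real.log_mul (by simpa using hz0) (hcc θ)]
    rw [intervalIntegral.integral_congr (fun θ _ => hpt θ)]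
    have hint : IntervalIntegrable
        (fun θ : ℝ => Real.log (‖1 - c * Complex.exp (θ * Complex.I)‖))
        volume (-π) π := by
      apply Continuous.intervalIntegrable
      apply cont_log_abs (by continuity)
      intro θ
      intro h
      exact hcc θ (by rw [h]; simp)
    rw [intervalIntegral.integral_add intervalIntegrable_const hint,
      circle_mean_log_pi c hc, intervalIntegral.integral_const]
    have hlog : Real.log r ≤ Real.log (‖z‖) :=
      Real.log_le_log h0 hlt.le
    have hππ : (π - (-π)) = 2*π := by ring
    rw [hππ, add_zero, smul_eq_mul]
    nlinarith [Real.pi_pos]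
  · -- |z| < r
    set c : ℂ := z / (r:ℂ) with hc_def
    have hc : ‖c‖ < 1 := by
      rw [hc_def, norm_div, Complex.norm_real, Real.norm_eq_abs, abs_of_pos h0]
      rw [div_lt_one h0]
      exact hgt
    have hcc : ∀ θ : ℝ, ‖1 - c * Complex.exp (-(θ * Complex.I))‖ ≠ 0 := by
      intro θ
      have h2 : ‖c * Complex.exp (-(θ * Complex.I))‖ < 1 := by
        rw [norm_mul]
        have : ‖Complex.exp (-(θ * Complex.I))‖ = 1 := by
          rw [show -((θ:ℂ) * Complex.I) = ((-θ : ℝ):ℂ) * Complex.I by push_cast; ring,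
            Complex.norm_exp_ofReal_mul_I]
        rw [this, mul_one]; exact hc
      have h3 := norm_sub_norm_le (1:ℂ) (c * Complex.exp (-(θ * Complex.I)))
      simp only [norm_one] at h3
      intro h; rw [h] at h3; linarith
    have hpt : ∀ θ : ℝ, Real.log (‖z - r * Complex.exp (θ * Complex.I)‖)
        = Real.log r
          + Real.log (‖1 - c * Complex.exp (-(θ * Complex.I))‖) := by
      intro θ
      have hexp : Complex.exp (θ * Complex.I) ≠ 0 := Complex.exp_ne_zero _
      have hfac : z - r * Complex.exp (θ * Complex.I)
          = (-(r * Complex.exp (θ * Complex.I))) * (1 - c * Complex.exp (-(θ * Complex.I))) := by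
        rw [hc_def]
        have hrne : (r:ℂ) ≠ 0 := by exact_mod_cast h0.ne'
        have h5 : Complex.exp (θ * Complex.I) * Complex.exp (-(θ * Complex.I)) = 1 := by
          rw [← Complex.exp_add]; simp
        field_simp
        linear_combination (-z) * h5
      rw [hfac, norm_mul, norm_neg, norm_mul, Complex.norm_real, Real.norm_eq_abs,
        Complex.norm_exp_ofReal_mul_I, mul_one, abs_of_pos h0,
        Real.log_mul h0.ne' (hcc θ)]
    rw [intervalIntegral.integral_congr (fun θ _ => hpt θ)]
    have hint : IntervalIntegrable
        (fun θ : ℝ => Real.log (‖1 - c * Complex.exp (-(θ * Complex.I))‖))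
        volume (-π) π := by
      apply Continuous.intervalIntegrable
      apply cont_log_abs (by continuity)
      intro θ
      intro h
      exact hcc θ (by rw [h]; simp)
    rw [intervalIntegral.integral_add intervalIntegrable_const hint,
      circle_mean_log_neg_pi c hc, intervalIntegral.integral_const]
    have hππ : (π - (-π)) = 2*π := by ring
    rw [hππ, add_zero, smul_eq_mul]

lemma inner_bound (z : ℂ) (hz : ‖z‖ < 1) {r : ℝ} (h0 : 0 < r) (h1 : r < 1)
    (hne : r ≠ ‖z‖) :
    ∫⁻ θ in Ioo (-π) π, ENNReal.ofReal (Lfn z ((r:ℂ) * Complex.exp (θ * Complex.I)))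
      ≤ ENNReal.ofReal (-(4*π*Real.log r)) := by
  have habsw : ∀ θ : ℝ, ‖(r:ℂ) * Complex.exp (θ * Complex.I)‖ = r := by
    intro θ
    rw [norm_mul, Complex.norm_real, Real.norm_eq_abs, Complex.norm_exp_ofReal_mul_I, mul_one, abs_of_pos h0]
  have hwz : ∀ θ : ℝ, z ≠ (r:ℂ) * Complex.exp (θ * Complex.I) := by
    intro θ h
    apply hne
    rw [h, habsw θ]
  set c1 : ℂ := z * (r:ℂ) with hc1_def
  have hc1 : ‖c1‖ < 1 := by
    rw [hc1_def, norm_mul, Complex.norm_real, Real.norm_eq_abs, abs_of_pos h0]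
    nlinarith [norm_nonneg z]
  have hconj : ∀ θ : ℝ, z * (starRingEnd ℂ) ((r:ℂ) * Complex.exp (θ * Complex.I))
      = c1 * Complex.exp (-(θ * Complex.I)) := by
    intro θ
    rw [map_mul, Complex.conj_ofReal, ← Complex.exp_conj]
    simp only [map_mul, Complex.conj_ofReal, Complex.conj_I, hc1_def]
    ring_nf
  set F : ℝ → ℝ := fun θ => 2 * Real.log (‖1 - c1 * Complex.exp (-(θ * Complex.I))‖)
    - 2 * Real.log (‖z - (r:ℂ) * Complex.exp (θ * Complex.I)‖) with hF_def
  have hFeq : ∀ θ : ℝ, Lfn z ((r:ℂ) * Complex.exp (θ * Complex.I)) = F θ := by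
    intro θ
    rw [hF_def, Lfn, hconj θ]
  have hcont1 : Continuous fun θ : ℝ => 1 - c1 * Complex.exp (-(θ * Complex.I)) :=
    continuous_const.sub (continuous_const.mul (Complex.continuous_exp.comp
      ((Complex.continuous_ofReal.mul continuous_const).neg)))
  have hcont2 : Continuous fun θ : ℝ => z - (r:ℂ) * Complex.exp (θ * Complex.I) :=
    continuous_const.sub (continuous_const.mul (Complex.continuous_exp.comp
      (Complex.continuous_ofReal.mul continuous_const)))
  have h1ne : ∀ θ : ℝ, (1 - c1 * Complex.exp (-(θ * Complex.I))) ≠ 0 := by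
    intro θ h
    have h2 : ‖c1 * Complex.exp (-(θ * Complex.I))‖ < 1 := by
      rw [norm_mul, show -((θ:ℂ) * Complex.I) = ((-θ : ℝ):ℂ) * Complex.I by push_cast; ring,
        Complex.norm_exp_ofReal_mul_I, mul_one]
      exact hc1
    rw [sub_eq_zero] at h
    rw [← h] at h2
    simp at h2
  have h2ne : ∀ θ : ℝ, z - (r:ℂ) * Complex.exp (θ * Complex.I) ≠ 0 := by
    intro θ
    rw [sub_ne_zero]
    exact hwz θ
  have hF_cont : Continuous F := by
    apply Continuous.sub
    · exact continuous_const.mul (cont_log_abs hcont1 h1ne)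
    · exact continuous_const.mul (cont_log_abs hcont2 h2ne)
  have hF0 : ∀ θ : ℝ, 0 ≤ F θ := by
    intro θ
    rw [← hFeq θ]
    exact Lfn_nonneg hz (by rw [habsw θ]; exact h1) (hwz θ)
  have hInt : IntegrableOn F (Ioo (-π) π) :=
    (hF_cont.integrableOn_Icc).mono_set Ioo_subset_Icc_self
  have step1 : ∫⁻ θ in Ioo (-π) π, ENNReal.ofReal (Lfn z ((r:ℂ) * Complex.exp (θ * Complex.I)))
      = ∫⁻ θ in Ioo (-π) π, ENNReal.ofReal (F θ) :=
    lintegral_congr fun θ => by rw [hFeq θ]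
  rw [step1, ← ofReal_integral_eq_lintegral_ofReal hInt (Filter.Eventually.of_forall hF0)]
  apply ENNReal.ofReal_le_ofReal
  rw [← integral_Ioc_eq_integral_Ioo,
    ← intervalIntegral.integral_of_le (by linarith [Real.pi_pos] : -π ≤ π)]
  have hint1 : IntervalIntegrable
      (fun θ : ℝ => 2 * Real.log (‖1 - c1 * Complex.exp (-(θ * Complex.I))‖))
      volume (-π) π :=
    (continuous_const.mul (cont_log_abs hcont1 h1ne)).intervalIntegrable _ _
  have hint2 : IntervalIntegrable
      (fun θ : ℝ => 2 * Real.log (‖z - (r:ℂ) * Complex.exp (θ * Complex.I)‖))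
      volume (-π) π :=
    (continuous_const.mul (cont_log_abs hcont2 h2ne)).intervalIntegrable _ _
  rw [hF_def]
  rw [intervalIntegral.integral_sub hint1 hint2, intervalIntegral.integral_const_mul,
    intervalIntegral.integral_const_mul, circle_mean_log_neg_pi c1 hc1, mul_zero, zero_sub]
  have := circle_lower z hz h0 h1 hne
  nlinarith [this]

lemma integral_id_mul_log : ∫ x in (0:ℝ)..1, x * Real.log x = -(1/4) := by
  set F : ℝ → ℝ := fun x => x * (x * Real.log x) / 2 - x^2/4 with hF_def
  have hFcont : ContinuousOn F (Icc 0 1) := by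
    apply Continuous.continuousOn
    exact ((continuous_id.mul Real.continuous_mul_log).div_const 2).sub
      ((continuous_pow 2).div_const 4)
  have hderiv : ∀ x ∈ Ioo (0:ℝ) 1, HasDerivAt F (x * Real.log x) x := by
    intro x hx
    have h1 := (hasDerivAt_id x).mul (Real.hasDerivAt_mul_log (ne_of_gt hx.1))
    have h2 := hasDerivAt_pow 2 x
    have h3 := (h1.div_const 2).sub (h2.div_const 4)
    refine h3.congr_deriv ?_
    have hlx : x ≠ 0 := ne_of_gt hx.1
    simp only [id_eq]
    norm_num
    ring
  have hint : IntervalIntegrable (fun x : ℝ => x * Real.log x) volume 0 1 :=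
    Real.continuous_mul_log.intervalIntegrable _ _
  rw [intervalIntegral.integral_eq_sub_of_hasDerivAt_of_le zero_le_one hFcont hderiv hint]
  simp [hF_def]

lemma disc_bound (z : ℂ) (hz : ‖z‖ < 1) :
    ∫⁻ w in unitDisc, ENNReal.ofReal (Lfn z w) ≤ ENNReal.ofReal π := by
  have mL : Measurable fun w : ℂ => ENNReal.ofReal (Lfn z w) := by
    apply Measurable.ennreal_ofReal
    apply Measurable.sub
    · apply Measurable.const_mul
      exact Real.measurable_log.comp (continuous_norm.comp
        (continuous_const.sub (continuous_const.mul (Complex.continuous_conj)))).measurable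
    · apply Measurable.const_mul
      exact Real.measurable_log.comp (continuous_norm.comp
        (continuous_const.sub continuous_id)).measurable
  set f : ℂ → ENNReal := (ball (0:ℂ) 1).indicator (fun w => ENNReal.ofReal (Lfn z w)) with hf_def
  have hf_meas : Measurable f := mL.indicator measurableSet_ball
  have step1 : (∫⁻ w in unitDisc, ENNReal.ofReal (Lfn z w)) = ∫⁻ w, f w :=
    (lintegral_indicator measurableSet_ball _).symm
  have hsymm : ∀ p : ℝ × ℝ, Complex.polarCoord.symm p = (p.1 : ℂ) * Complex.exp (p.2 * Complex.I) := by
    intro p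
    rw [Complex.polarCoord_symm_apply, Complex.exp_mul_I]
    push_cast
    ring
  have step2 : ∫⁻ w, f w
      = ∫⁻ p in polarCoord.target, ENNReal.ofReal p.1 * f ((p.1 : ℂ) * Complex.exp (p.2 * Complex.I)) := by
    rw [← my_lintegral_polar f]
    exact setLIntegral_congr_fun polarCoord.open_target.measurableSet
      (fun p _ => by rw [hsymm p])
  have hmeas_prod : Measurable fun p : ℝ × ℝ =>
      ENNReal.ofReal p.1 * f ((p.1 : ℂ) * Complex.exp (p.2 * Complex.I)) := by
    apply Measurable.mul
    · exact measurable_fst.ennreal_ofReal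
    · apply hf_meas.comp
      apply Continuous.measurable
      exact (Complex.continuous_ofReal.comp continuous_fst).mul
        (Complex.continuous_exp.comp
          ((Complex.continuous_ofReal.comp continuous_snd).mul continuous_const))
  have hne_ae : ∀ᵐ r : ℝ ∂volume, r ≠ ‖z‖ := by
    rw [ae_iff]
    have : {r : ℝ | ¬ r ≠ ‖z‖} = {‖z‖} := by
      ext r; simp
    rw [this]
    exact measure_singleton _
  set Bnd : ℝ → ENNReal :=
    (Ioo (0:ℝ) 1).indicator (fun r => ENNReal.ofReal (r * (-(4*π*Real.log r)))) with hBnd_def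
  have step3 : ∫⁻ p in polarCoord.target,
        ENNReal.ofReal p.1 * f ((p.1 : ℂ) * Complex.exp (p.2 * Complex.I))
      ≤ ∫⁻ r in Ioi (0:ℝ), Bnd r := by
    rw [show polarCoord.target = Ioi (0:ℝ) ×ˢ Ioo (-π) π from rfl]
    rw [Measure.volume_eq_prod, ← Measure.prod_restrict,
      MeasureTheory.lintegral_prod _ hmeas_prod.aemeasurable]
    apply lintegral_mono_ae
    filter_upwards [ae_restrict_mem measurableSet_Ioi, ae_restrict_of_ae hne_ae] with r hr hner
    rcases lt_or_ge r 1 with hr1 | hr1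
    · have hmem : ∀ θ : ℝ, ((r:ℂ) * Complex.exp (θ * Complex.I)) ∈ ball (0:ℂ) 1 := by
        intro θ
        rw [mem_ball_zero_iff, norm_mul, Complex.norm_real, Real.norm_eq_abs,
          Complex.norm_exp_ofReal_mul_I, mul_one, abs_of_pos hr]
        exact hr1
      have heq : ∀ θ : ℝ, f ((r:ℂ) * Complex.exp (θ * Complex.I))
          = ENNReal.ofReal (Lfn z ((r:ℂ) * Complex.exp (θ * Complex.I))) := by
        intro θ
        rw [hf_def, indicator_of_mem (hmem θ)]
      calc ∫⁻ θ in Ioo (-π) π, ENNReal.ofReal r * f ((r:ℂ) * Complex.exp (θ * Complex.I))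
          = ENNReal.ofReal r * ∫⁻ θ in Ioo (-π) π,
              ENNReal.ofReal (Lfn z ((r:ℂ) * Complex.exp (θ * Complex.I))) := by
            rw [← lintegral_const_mul' _ _ ENNReal.ofReal_ne_top]
            exact lintegral_congr fun θ => by rw [heq θ]
        _ ≤ ENNReal.ofReal r * ENNReal.ofReal (-(4*π*Real.log r)) := by
            apply mul_le_mul_right
            exact inner_bound z hz hr hr1 hner
        _ = Bnd r := by
            rw [hBnd_def, indicator_of_mem (mem_Ioo.2 ⟨hr, hr1⟩),
              ← ENNReal.ofReal_mul (le_of_lt hr)]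
    · have hnmem : ∀ θ : ℝ, ((r:ℂ) * Complex.exp (θ * Complex.I)) ∉ ball (0:ℂ) 1 := by
        intro θ h
        rw [mem_ball_zero_iff, norm_mul, Complex.norm_real, Real.norm_eq_abs,
          Complex.norm_exp_ofReal_mul_I, mul_one, abs_of_pos hr] at h
        linarith
      have heq : ∀ θ : ℝ, ENNReal.ofReal r * f ((r:ℂ) * Complex.exp (θ * Complex.I)) = 0 := by
        intro θ
        rw [hf_def, indicator_of_notMem (hnmem θ), mul_zero]
      rw [lintegral_congr fun θ => heq θ, lintegral_zero]
      exact zero_le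
  have step4 : ∫⁻ r in Ioi (0:ℝ), Bnd r = ENNReal.ofReal π := by
    rw [hBnd_def, lintegral_indicator measurableSet_Ioo,
      Measure.restrict_restrict measurableSet_Ioo,
      show Ioo (0:ℝ) 1 ∩ Ioi 0 = Ioo 0 1 from inter_eq_left.2 (fun x hx => hx.1)]
    have hcont : Continuous fun r : ℝ => r * (-(4*π*Real.log r)) := by
      have h1 : Continuous fun r : ℝ => (-(4*π)) * (r * Real.log r) :=
        continuous_const.mul Real.continuous_mul_log
      convert h1 using 1
      funext r
      ring
    have hInt : IntegrableOn (fun r : ℝ => r * (-(4*π*Real.log r))) (Ioo (0:ℝ) 1) :=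
      (hcont.integrableOn_Icc).mono_set Ioo_subset_Icc_self
    have hnn : 0 ≤ᵐ[volume.restrict (Ioo (0:ℝ) 1)] fun r : ℝ => r * (-(4*π*Real.log r)) := by
      filter_upwards [ae_restrict_mem measurableSet_Ioo] with r hr
      have hlog := Real.log_nonpos (le_of_lt hr.1) (le_of_lt hr.2)
      exact mul_nonneg hr.1.le (by nlinarith [Real.pi_pos])
    rw [← ofReal_integral_eq_lintegral_ofReal hInt hnn]
    congr 1
    rw [← integral_Ioc_eq_integral_Ioo, ← intervalIntegral.integral_of_le zero_le_one]
    have : ∀ x : ℝ, x * (-(4*π*Real.log x)) = (-(4*π)) * (x * Real.log x) := fun x => by ring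
    rw [intervalIntegral.integral_congr (fun x _ => this x),
      intervalIntegral.integral_const_mul, integral_id_mul_log]
    ring
  calc ∫⁻ w in unitDisc, ENNReal.ofReal (Lfn z w) = ∫⁻ w, f w := step1
    _ = _ := step2
    _ ≤ _ := step3
    _ = _ := step4

lemma mem_unitDisc_iff {w : ℂ} : w ∈ unitDisc ↔ ‖w‖ < 1 := by
  rw [unitDisc, mem_ball_zero_iff]

/-- integral estimates for the α-harmonic Green function. -/
theorem greenFn_integral_bounds
    (α : ℝ) (hα : 0 ≤ α)
    (g : ℂ → ℂ) (hg : ContinuousOn g (Metric.closedBall 0 1)) :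
    (∀ z ∈ unitDisc,
      ENNReal.ofReal (1 / Real.pi) *
          (∫⁻ w in unitDisc, ENNReal.ofReal (‖greenFn α z w * g w‖)) ≤
        ENNReal.ofReal ((2 : ℝ) ^ α * supDisc g)) ∧
      ∀ w ∈ unitDisc,
        (∫⁻ z in unitDisc, ENNReal.ofReal (‖greenFn α z w‖)) < ⊤ := by
  have hUD : MeasurableSet unitDisc := measurableSet_ball
  obtain ⟨C, hC⟩ := (isCompact_closedBall (0:ℂ) 1).exists_bound_of_continuousOn hg
  have hbdd : BddAbove (range fun w : ℂ => ⨆ _ : w ∈ unitDisc, ‖g w‖) := by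
    refine ⟨max C 0, ?_⟩
    rintro x ⟨w, rfl⟩
    simp only []
    by_cases hw : w ∈ unitDisc
    · rw [ciSup_pos (f := fun _ : w ∈ unitDisc => ‖g w‖) hw]
      have h1 : ‖g w‖ ≤ C := hC w (ball_subset_closedBall hw)
      exact le_trans h1 (le_max_left _ _)
    · haveI : IsEmpty (w ∈ unitDisc) := by simpa using hw
      rw [Real.iSup_of_isEmpty]
      exact le_max_right _ _
  have hsup_le : ∀ w ∈ unitDisc, ‖g w‖ ≤ supDisc g := by
    intro w hw
    rw [supDisc]
    have h1 : ‖g w‖ = ⨆ _ : w ∈ unitDisc, ‖g w‖ :=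
      (ciSup_pos (f := fun _ : w ∈ unitDisc => ‖g w‖) hw).symm
    rw [h1]
    exact le_ciSup hbdd w
  have hS0 : 0 ≤ supDisc g :=
    le_trans (norm_nonneg (g 0)) (hsup_le 0 (mem_unitDisc_iff.2 (by simp)))
  constructor
  · intro z hz
    have hzabs : ‖z‖ < 1 := mem_unitDisc_iff.1 hz
    set c : ℝ := (2:ℝ)^α * supDisc g with hc_def
    have hc0 : 0 ≤ c := mul_nonneg (Real.rpow_nonneg (by norm_num) α) hS0
    have hz_ae : ∀ᵐ w : ℂ ∂volume, w ≠ z := by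
      rw [ae_iff]
      have : {w : ℂ | ¬ w ≠ z} = {z} := by ext w; simp
      rw [this]
      exact measure_singleton _
    have key : (∫⁻ w in unitDisc, ENNReal.ofReal (‖greenFn α z w * g w‖))
        ≤ ENNReal.ofReal c * ENNReal.ofReal π := by
      calc (∫⁻ w in unitDisc, ENNReal.ofReal (‖greenFn α z w * g w‖))
          ≤ ∫⁻ w in unitDisc, ENNReal.ofReal c * ENNReal.ofReal (Lfn z w) := by
            apply lintegral_mono_ae
            filter_upwards [ae_restrict_mem hUD, ae_restrict_of_ae hz_ae] with w hw hwz
            have hwabs : ‖w‖ < 1 := mem_unitDisc_iff.1 hw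
            have hne : z ≠ w := fun h => hwz h.symm
            have h1 : ‖greenFn α z w‖ ≤ 2^α * Lfn z w :=
              greenFn_abs_le hα hzabs hwabs hne
            have h2 : ‖g w‖ ≤ supDisc g := hsup_le w hw
            have hL0 : 0 ≤ Lfn z w := Lfn_nonneg hzabs hwabs hne
            rw [← ENNReal.ofReal_mul hc0]
            apply ENNReal.ofReal_le_ofReal
            rw [norm_mul]
            calc ‖greenFn α z w‖ * ‖g w‖
                ≤ (2^α * Lfn z w) * supDisc g :=
                  mul_le_mul h1 h2 (norm_nonneg _)
                    (mul_nonneg (Real.rpow_nonneg (by norm_num) α) hL0)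
              _ = c * Lfn z w := by rw [hc_def]; ring
        _ = ENNReal.ofReal c * ∫⁻ w in unitDisc, ENNReal.ofReal (Lfn z w) :=
            lintegral_const_mul' _ _ ENNReal.ofReal_ne_top
        _ ≤ ENNReal.ofReal c * ENNReal.ofReal π :=
            mul_le_mul_right (disc_bound z hzabs) _
    calc ENNReal.ofReal (1 / Real.pi) *
          (∫⁻ w in unitDisc, ENNReal.ofReal (‖greenFn α z w * g w‖))
        ≤ ENNReal.ofReal (1 / Real.pi) * (ENNReal.ofReal c * ENNReal.ofReal π) :=
          mul_le_mul_right key _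
      _ = ENNReal.ofReal ((2:ℝ)^α * supDisc g) := by
          rw [← ENNReal.ofReal_mul hc0, ← ENNReal.ofReal_mul (by positivity : (0:ℝ) ≤ 1/π)]
          congr 1
          rw [hc_def]
          field_simp
  · intro w hw
    have hwabs : ‖w‖ < 1 := mem_unitDisc_iff.1 hw
    have hw_ae : ∀ᵐ z : ℂ ∂volume, z ≠ w := by
      rw [ae_iff]
      have : {z : ℂ | ¬ z ≠ w} = {w} := by ext z; simp
      rw [this]
      exact measure_singleton _
    have key : (∫⁻ z in unitDisc, ENNReal.ofReal (‖greenFn α z w‖))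
        ≤ ENNReal.ofReal ((2:ℝ)^α) * ENNReal.ofReal π := by
      calc (∫⁻ z in unitDisc, ENNReal.ofReal (‖greenFn α z w‖))
          ≤ ∫⁻ z in unitDisc, ENNReal.ofReal ((2:ℝ)^α) * ENNReal.ofReal (Lfn w z) := by
            apply lintegral_mono_ae
            filter_upwards [ae_restrict_mem hUD, ae_restrict_of_ae hw_ae] with z hzmem hzw
            have hzabs : ‖z‖ < 1 := mem_unitDisc_iff.1 hzmem
            have h1 : ‖greenFn α z w‖ ≤ 2^α * Lfn z w :=
              greenFn_abs_le hα hzabs hwabs hzw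
            rw [← ENNReal.ofReal_mul (Real.rpow_nonneg (by norm_num) α)]
            apply ENNReal.ofReal_le_ofReal
            rw [← Lfn_symm]
            exact h1
        _ = ENNReal.ofReal ((2:ℝ)^α) * ∫⁻ z in unitDisc, ENNReal.ofReal (Lfn w z) :=
            lintegral_const_mul' _ _ ENNReal.ofReal_ne_top
        _ ≤ ENNReal.ofReal ((2:ℝ)^α) * ENNReal.ofReal π :=
            mul_le_mul_right (disc_bound w hwabs) _
    apply lt_of_le_of_lt key
    exact ENNReal.mul_lt_top ENNReal.ofReal_lt_top ENNReal.ofReal_lt_top
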